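/- arXiv:1009.1199 — 4 statements merged into one kernel-verified Lean document; each statement's English description precedes it below -/
import Mathlib

section
/- Let U, V, W be finite-dimensional complex vector spaces with dim U = m, let j be a natural number with j ≤ m − 1, and let r ≥ 1. Given u₁, …, u_r ∈ U*, v₁, …, v_r ∈ V*, w₁, …, w_r ∈ W*, let ψ : V ⊗ ⋀ʲ U* → W* ⊗ ⋀ʲ⁺¹ U* be the unique linear map satisfying ψ(v ⊗ ω) = Σ_{i=1}^r v_i(v) • (w_i ⊗ (u_i ∧ ω)) for all v ∈ V and ω ∈ ⋀ʲ U*. Then the rank of ψ is at most r · (m−1 choose j). -/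
open scoped TensorProduct

/-- Left exterior multiplication by `u : M`, as a linear map `⋀ʲ M → ⋀ʲ⁺¹ M`. -/
noncomputable def wedgeMap {R : Type*} [CommRing R] {M : Type*} [AddCommGroup M] [Module R M]
    (j : ℕ) (u : M) : ⋀[R]^j M →ₗ[R] ⋀[R]^(j + 1) M :=
  LinearMap.restrict (LinearMap.mulLeft R (ExteriorAlgebra.ι R u))
    (fun x hx => by
      show ExteriorAlgebra.ι R u * x ∈
        LinearMap.range (ExteriorAlgebra.ι R : M →ₗ[R] ExteriorAlgebra R M) ^ (j + 1)
      rw [pow_succ']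
      exact Submodule.mul_mem_mul (LinearMap.mem_range_self _ u) hx)

lemma wedgeMap_coe {R : Type*} [CommRing R] {M : Type*} [AddCommGroup M] [Module R M]
    (j : ℕ) (u : M) (x : ⋀[R]^j M) :
    (wedgeMap j u x : ExteriorAlgebra R M) = ExteriorAlgebra.ι R u * (x : ExteriorAlgebra R M) :=
  rfl

open ExteriorAlgebra in
lemma exists_span_wedgeMap (K : Type*) [Field K] (M : Type*) [AddCommGroup M] [Module K M]
    [FiniteDimensional K M] (m j : ℕ) (hM : Module.finrank K M = m) (u : M) :
    ∃ t : Fin ((m - 1).choose j) → (⋀[K]^(j + 1) M : Submodule K (ExteriorAlgebra K M)),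
      LinearMap.range (wedgeMap (R := K) j u) ≤ Submodule.span K (Set.range t) := by
  classical
  rcases eq_or_ne u 0 with rfl | hu
  · refine ⟨0, ?_⟩
    rintro y ⟨x, rfl⟩
    have : wedgeMap (R := K) j (0 : M) x = 0 := by
      apply Subtype.ext
      rw [wedgeMap_coe]
      simp
    rw [this]
    exact Submodule.zero_mem _
  -- nonzero case
  have hs : LinearIndepOn K id ({u} : Set M) := (linearIndepOn_singleton_iff K).mpr hu
  set ιt := ↥(hs.extend (Set.subset_univ ({u} : Set M))) with hιt
  set B := Module.Basis.extend hs with hBdef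
  haveI : Fintype ιt := FiniteDimensional.fintypeBasisIndex B
  letI : LinearOrder ιt := LinearOrder.lift' (fun i => (Fintype.equivFin ιt) i)
    (Equiv.injective _)
  let i₀ : ιt := ⟨u, hs.subset_extend _ rfl⟩
  have hB0 : B i₀ = u := by rw [hBdef, Module.Basis.extend_apply_self]
  have hcardι : Fintype.card ιt = m := by rw [← hM, Module.finrank_eq_card_basis B]
  have hκ : Fintype.card {i : ιt // i ≠ i₀} = m - 1 := by
    rw [Fintype.card_subtype_compl, Fintype.card_subtype_eq, hcardι]
  -- the spanning family
  let g : {S : Finset {i : ιt // i ≠ i₀} // S.card = j} → ExteriorAlgebra K M :=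
    fun S => ExteriorAlgebra.ι K u * ιMulti_family K j (fun i : {i : ιt // i ≠ i₀} => B i.1) S
  have hg_mem : ∀ S, g S ∈ ⋀[K]^(j + 1) M := by
    intro S
    show _ ∈ LinearMap.range (ι K : M →ₗ[K] ExteriorAlgebra K M) ^ (j + 1)
    rw [pow_succ']
    exact Submodule.mul_mem_mul (LinearMap.mem_range_self _ u)
      (ιMulti_range K j (Set.mem_range_self _))
  -- key claim
  have key : ∀ y ∈ (⋀[K]^j M : Submodule K (ExteriorAlgebra K M)),
      ExteriorAlgebra.ι K u * y ∈ Submodule.span K (Set.range g) := by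
    intro y hy
    rw [← ιMulti_span_fixedDegree] at hy
    induction hy using Submodule.span_induction with
    | mem z hz =>
      obtain ⟨v, rfl⟩ := hz
      -- ι u * ιMulti j v = ιMulti (j+1) (Fin.cons u v)
      have hcons : ExteriorAlgebra.ι K u * ιMulti K j v = ιMulti K (j + 1) (Fin.cons u v) := by
        rw [ιMulti_succ_apply, Fin.cons_zero]
        have hvt : Matrix.vecTail (Fin.cons u v) = v := by
          funext a
          simp [Matrix.vecTail]
        rw [hvt]
      rw [hcons]
      set c : Fin (j + 1) → ιt → K := fun i k => B.repr ((Fin.cons u v : Fin (j + 1) → M) i) k with hc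
      have hx : (Fin.cons u v : Fin (j + 1) → M) = fun i => ∑ k, c i k • B k := by
        funext i
        exact (B.sum_repr _).symm
      have expand : ιMulti K (j + 1) (Fin.cons u v)
          = ∑ r : Fin (j + 1) → ιt, (∏ i, c i (r i)) • ιMulti K (j + 1) (fun i => B (r i)) := by
        calc ιMulti K (j + 1) (Fin.cons u v)
            = ιMulti K (j + 1) (fun i => ∑ k, c i k • B k) := by rw [← hx]
          _ = ∑ r : Fin (j + 1) → ιt, ιMulti K (j + 1) (fun i => c i (r i) • B (r i)) :=
              (ιMulti K (j + 1)).toMultilinearMap.map_sum (fun i k => c i k • B k)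
          _ = ∑ r : Fin (j + 1) → ιt, (∏ i, c i (r i)) • ιMulti K (j + 1) (fun i => B (r i)) := by
              refine Finset.sum_congr rfl fun r _ => ?_
              exact (ιMulti K (j + 1)).toMultilinearMap.map_smul_univ (fun i => c i (r i))
                (fun i => B (r i))
      rw [expand]
      refine Submodule.sum_mem _ fun r _ => ?_
      rcases eq_or_ne (r 0) i₀ with hr0 | hr0
      · by_cases hinj : Function.Injective r
        · -- injective case: reduce to a sorted subset
          have hne : ∀ a : Fin j, r a.succ ≠ i₀ := by
            intro a h
            exact (Fin.succ_ne_zero a) (hinj (h.trans hr0.symm))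
          set t : Fin j → {i : ιt // i ≠ i₀} := fun a => ⟨r a.succ, hne a⟩ with htdef
          have ht : Function.Injective t := by
            intro a b hab
            have : r a.succ = r b.succ := congrArg Subtype.val hab
            exact Fin.succ_injective _ (hinj this)
          set S : Finset {i : ιt // i ≠ i₀} := Finset.univ.image t with hSdef
          have hS : S.card = j := by
            rw [hSdef, Finset.card_image_of_injective _ ht, Finset.card_univ, Fintype.card_fin]
          have hrange : Set.range t = (S : Set {i : ιt // i ≠ i₀}) := by
            ext a; simp [hSdef]
          let e := S.orderIsoOfFin hS
          let σ : Equiv.Perm (Fin j) :=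
            (Equiv.ofInjective t ht).trans ((Equiv.setCongr hrange).trans e.toEquiv.symm)
          have hts : ∀ a, (e (σ a) : {i : ιt // i ≠ i₀}) = t a := by
            intro a
            have h1 : e.toEquiv (σ a)
                = (Equiv.setCongr hrange) ((Equiv.ofInjective t ht) a) :=
              Equiv.apply_symm_apply e.toEquiv _
            exact congrArg Subtype.val h1
          have hperm : ιMulti K j (fun a => B (t a).1)
              = Equiv.Perm.sign σ • ιMulti K j (fun a => B ((e a : {i : ιt // i ≠ i₀})).1) := by
            have := AlternatingMap.map_perm (g := ιMulti K (M := M) j)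
              (fun a => B ((e a : {i : ιt // i ≠ i₀})).1) σ
            rw [← this]
            congr 1
            funext a
            simp only [Function.comp_apply]
            rw [hts a]
          have hfinal : ιMulti K (j + 1) (fun i => B (r i))
              = Equiv.Perm.sign σ • g ⟨S, hS⟩ := by
            rw [ιMulti_succ_apply]
            have h0 : B (r 0) = u := by rw [hr0, hB0]
            have htail : Matrix.vecTail (fun i => B (r i)) = fun a => B (t a).1 := by
              funext a
              simp [Matrix.vecTail, htdef]
            rw [h0, htail, hperm, mul_smul_comm]
            rfl
          rw [hfinal]
          have hzsmul : (Equiv.Perm.sign σ : ℤˣ) • g ⟨S, hS⟩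
              = ((Equiv.Perm.sign σ : ℤ) : K) • g ⟨S, hS⟩ := by
            rw [Units.smul_def, Int.cast_smul_eq_zsmul]
          rw [hzsmul]
          exact Submodule.smul_mem _ _ (Submodule.smul_mem _ _
            (Submodule.subset_span (Set.mem_range_self _)))
        · -- non-injective: term vanishes
          obtain ⟨a, b, hab, hne⟩ := Function.not_injective_iff.mp hinj
          have : ιMulti K (j + 1) (fun i => B (r i)) = 0 :=
            AlternatingMap.map_eq_zero_of_eq _ _ (congrArg B hab) hne
          rw [this, smul_zero]
          exact Submodule.zero_mem _
      · -- coefficient vanishes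
        have h0 : c 0 (r 0) = 0 := by
          have hBi : B.repr (B i₀) (r 0) = 0 := by
            rw [B.repr_self]
            exact Finsupp.single_eq_of_ne hr0
          calc c 0 (r 0) = B.repr u (r 0) := by rw [hc]; simp
            _ = B.repr (B i₀) (r 0) := by rw [hB0]
            _ = 0 := hBi
        have : (∏ i, c i (r i)) = 0 := Finset.prod_eq_zero (Finset.mem_univ 0) h0
        rw [this, zero_smul]
        exact Submodule.zero_mem _
    | zero => rw [mul_zero]; exact Submodule.zero_mem _
    | add a b _ _ ha hb => rw [mul_add]; exact Submodule.add_mem _ ha hb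
    | smul a x _ hx => rw [mul_smul_comm]; exact Submodule.smul_mem _ _ hx
  -- package into Fin ((m-1).choose j)
  have hcard : Fintype.card {S : Finset {i : ιt // i ≠ i₀} // S.card = j} = (m - 1).choose j := by
    rw [Fintype.card_finset_len, hκ]
  let φ := (Fintype.equivFinOfCardEq hcard).symm
  refine ⟨fun a => ⟨g (φ a), hg_mem (φ a)⟩, ?_⟩
  rintro y ⟨x, rfl⟩
  have hx : ExteriorAlgebra.ι K u * (x : ExteriorAlgebra K M)
      ∈ Submodule.span K (Set.range g) := key _ x.2
  have hrg : Set.range g = Set.range (fun a =>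
      ((⟨g (φ a), hg_mem (φ a)⟩ : (⋀[K]^(j+1) M : Submodule K (ExteriorAlgebra K M))) :
        ExteriorAlgebra K M)) := by
    simp only []
    rw [show (fun a => g (φ a)) = g ∘ φ from rfl]
    exact (Set.range_comp g φ).symm ▸ (φ.surjective.range_comp g).symm
  rw [hrg] at hx
  have : Set.range (fun a => ((⟨g (φ a), hg_mem (φ a)⟩ :
        (⋀[K]^(j+1) M : Submodule K (ExteriorAlgebra K M))) : ExteriorAlgebra K M))
      = (⋀[K]^(j+1) M : Submodule K (ExteriorAlgebra K M)).subtype ''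
        Set.range (fun a => (⟨g (φ a), hg_mem (φ a)⟩ :
          (⋀[K]^(j+1) M : Submodule K (ExteriorAlgebra K M)))) := by
    rw [← Set.range_comp]; rfl
  rw [this, ← Submodule.map_span] at hx
  obtain ⟨z, hz, hzval⟩ := Submodule.mem_map.mp hx
  have hz2 : z = wedgeMap (R := K) j u x :=
    Subtype.ext (hzval.trans (wedgeMap_coe j u x).symm)
  exact hz2 ▸ hz

set_option maxHeartbeats 1000000 in
set_option synthInstance.maxHeartbeats 400000 in
/-- If `ψ : V ⊗ ⋀ʲ U* → W* ⊗ ⋀ʲ⁺¹ U*` is the exterior flattening of the tensor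
`x = ∑ i, u i ⊗ v i ⊗ w i` (a tensor of rank at most `r`), then the rank of `ψ`
(the dimension of its image) is at most `r * ((m-1).choose j)`. -/
theorem rank_exteriorFlattening_le (m r : ℕ) (hm : 1 ≤ m) (hr : 1 ≤ r) (j : ℕ) (hj : j ≤ m - 1)
    (U V W : Type*) [AddCommGroup U] [Module ℂ U] [FiniteDimensional ℂ U]
    [AddCommGroup V] [Module ℂ V] [FiniteDimensional ℂ V]
    [AddCommGroup W] [Module ℂ W] [FiniteDimensional ℂ W]
    (hU : Module.finrank ℂ U = m)
    (u : Fin r → Module.Dual ℂ U) (v : Fin r → Module.Dual ℂ V) (w : Fin r → Module.Dual ℂ W)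
    (ψ : V ⊗[ℂ] ⋀[ℂ]^j (Module.Dual ℂ U) →ₗ[ℂ]
      Module.Dual ℂ W ⊗[ℂ] ⋀[ℂ]^(j + 1) (Module.Dual ℂ U))
    (hψ : ∀ (x : V) (ω : ⋀[ℂ]^j (Module.Dual ℂ U)),
      ψ (x ⊗ₜ[ℂ] ω) = ∑ i, v i x • (w i ⊗ₜ[ℂ] wedgeMap j (u i) ω)) :
    Module.rank ℂ (LinearMap.range ψ) ≤ (r * (m - 1).choose j : ℕ) := by
  classical
  have hU' : Module.finrank ℂ (Module.Dual ℂ U) = m := by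
    rw [Subspace.dual_finrank_eq, hU]
  choose t ht using fun i : Fin r =>
    exists_span_wedgeMap ℂ (Module.Dual ℂ U) m j hU' (u i)
  let F : Fin r × Fin ((m - 1).choose j) →
      Module.Dual ℂ W ⊗[ℂ] ⋀[ℂ]^(j + 1) (Module.Dual ℂ U) :=
    fun p => w p.1 ⊗ₜ[ℂ] (t p.1 p.2 : (⋀[ℂ]^(j + 1) (Module.Dual ℂ U) :
      Submodule ℂ (ExteriorAlgebra ℂ (Module.Dual ℂ U))))
  have hrange : LinearMap.range ψ ≤ Submodule.span ℂ (Set.range F) := by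
    rw [LinearMap.range_eq_map, ← TensorProduct.span_tmul_eq_top, Submodule.map_span,
      Submodule.span_le]
    rintro _ ⟨_, ⟨x, ω, rfl⟩, rfl⟩
    rw [hψ]
    refine Submodule.sum_mem _ fun i _ => Submodule.smul_mem _ _ ?_
    have h1 : wedgeMap j (u i) ω ∈ Submodule.span ℂ (Set.range (t i)) :=
      ht i ⟨ω, rfl⟩
    have h2 : w i ⊗ₜ[ℂ] wedgeMap j (u i) ω ∈
        Submodule.map (TensorProduct.mk ℂ (Module.Dual ℂ W) _ (w i))
          (Submodule.span ℂ (Set.range (t i))) :=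
      Submodule.mem_map_of_mem h1
    rw [Submodule.map_span] at h2
    refine Submodule.span_mono ?_ h2
    rintro _ ⟨_, ⟨k, rfl⟩, rfl⟩
    exact ⟨(i, k), rfl⟩
  have h1 : Module.rank ℂ (LinearMap.range ψ)
      ≤ Module.rank ℂ (Submodule.span ℂ (Set.range F)) := by
    exact Submodule.rank_mono (s := (LinearMap.range ψ : Submodule ℂ (Module.Dual ℂ W ⊗[ℂ] ⋀[ℂ]^(j + 1) (Module.Dual ℂ U)))) (t := Submodule.span ℂ (Set.range F)) hrange
  have h2 := rank_span_le (R := ℂ) (Set.range F)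
  have h3 : Cardinal.mk (Set.range F) ≤ ((r * (m - 1).choose j : ℕ) : Cardinal) := by
    have := Cardinal.mk_range_le_lift (f := F)
    simpa [Cardinal.mk_fintype] using this
  exact h1.trans (h2.trans h3)
end

section
/- Let B and C be n×n complex matrices, and let I denote the n×n identity matrix. Then the rank of the 3n×3n block matrix [[0, I, −B], [−I, 0, C], [B, −C, 0]] equals 2n + rank(B·C − C·B). In particular, this matrix has rank at most 2n if and only if B and C commute. -/
open Matrix

/-- The `3n × 3n` block matrix `M(A₁,A₂,A₃) = [[0, A₃, −A₂], [−A₃, 0, A₁], [A₂, −A₁, 0]]`. -/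
def Mmat {n : ℕ} (A₁ A₂ A₃ : Matrix (Fin n) (Fin n) ℂ) :
    Matrix (Fin 3 × Fin n) (Fin 3 × Fin n) ℂ :=
  Matrix.of fun p q => ![![0, A₃, -A₂], ![-A₃, 0, A₁], ![A₂, -A₁, 0]] p.1 q.1 p.2 q.2

private def prodSubEquiv {R M N : Type*} [Ring R] [AddCommGroup M] [AddCommGroup N]
    [Module R M] [Module R N] (P : Submodule R M) (Q : Submodule R N) :
    ↥(P.prod Q) ≃ₗ[R] ↥P × ↥Q where
  toFun x := (⟨x.1.1, x.2.1⟩, ⟨x.1.2, x.2.2⟩)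
  invFun x := ⟨(x.1.1, x.2.1), x.1.2, x.2.2⟩
  map_add' _ _ := rfl
  map_smul' _ _ := rfl
  left_inv _ := rfl
  right_inv _ := rfl

private lemma fromColumns_add' {R : Type*} [Semiring R] {m n₁ n₂ : Type*}
    (A₁ B₁ : Matrix m n₁ R) (A₂ B₂ : Matrix m n₂ R) :
    fromCols A₁ A₂ + fromCols B₁ B₂ = fromCols (A₁ + B₁) (A₂ + B₂) := by
  ext _ (j | j) <;> simp

private lemma fromRows_add' {R : Type*} [Semiring R] {m₁ m₂ n : Type*}
    (A₁ B₁ : Matrix m₁ n R) (A₂ B₂ : Matrix m₂ n R) :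
    fromRows A₁ A₂ + fromRows B₁ B₂ = fromRows (A₁ + B₁) (A₂ + B₂) := by
  ext (i | i) _ <;> simp

private lemma rank_fromBlocks_diag {m p : Type*} [Fintype m] [Fintype p] [DecidableEq m]
    [DecidableEq p] (A : Matrix m m ℂ) (D : Matrix p p ℂ) :
    (fromBlocks A 0 0 D).rank = A.rank + D.rank := by
  classical
  set e := LinearEquiv.sumArrowLequivProdArrow m p ℂ ℂ with he
  have hmap : (LinearMap.range (fromBlocks A 0 0 D).mulVecLin).map
      (e : (m ⊕ p → ℂ) →ₗ[ℂ] (m → ℂ) × (p → ℂ)) =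
      (LinearMap.range A.mulVecLin).prod (LinearMap.range D.mulVecLin) := by
    ext v
    simp only [Submodule.mem_map, LinearMap.mem_range, Submodule.mem_prod,
      LinearEquiv.coe_coe]
    constructor
    · rintro ⟨w, ⟨x, rfl⟩, rfl⟩
      constructor
      · refine ⟨x ∘ Sum.inl, ?_⟩
        funext i
        simp [he, mulVec, dotProduct, Fintype.sum_sum_type]
      · refine ⟨x ∘ Sum.inr, ?_⟩
        funext i
        simp [he, mulVec, dotProduct, Fintype.sum_sum_type]
    · rintro ⟨⟨x₁, h₁⟩, ⟨x₂, h₂⟩⟩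
      refine ⟨Sum.elim (A *ᵥ x₁) (D *ᵥ x₂), ⟨Sum.elim x₁ x₂, ?_⟩, ?_⟩
      · simp [Matrix.fromBlocks_mulVec]
      · ext i <;> simp [he, ← h₁, ← h₂]
  calc (fromBlocks A 0 0 D).rank
      = Module.finrank ℂ
        ((LinearMap.range (fromBlocks A 0 0 D).mulVecLin).map
          (e : (m ⊕ p → ℂ) →ₗ[ℂ] (m → ℂ) × (p → ℂ))) :=
        (LinearEquiv.finrank_map_eq e _).symm
    _ = Module.finrank ℂ
        ((LinearMap.range A.mulVecLin).prod (LinearMap.range D.mulVecLin)) := by rw [hmap]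
    _ = A.rank + D.rank := by
        rw [(prodSubEquiv _ _).finrank_eq, Module.finrank_prod]; rfl

private lemma rank_eq_zero_iff' {m : Type*} [Fintype m] [DecidableEq m] (D : Matrix m m ℂ) :
    D.rank = 0 ↔ D = 0 := by
  constructor
  · intro h
    have h2 : LinearMap.range D.mulVecLin = ⊥ := Submodule.finrank_eq_zero.mp h
    have h3 : D.mulVecLin = 0 := LinearMap.range_eq_bot.mp h2
    ext i j
    have := congrFun (congrFun (congrArg DFunLike.coe h3) (Pi.single j 1)) i
    simpa [Matrix.mulVec_single] using this
  · rintro rfl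
    exact Matrix.rank_zero

/-- The rank of the `3n × 3n` block matrix `[[0, I, −B], [−I, 0, C], [B, −C, 0]]` equals
`2n + rank (B·C − C·B)`; in particular it is at most `2n` if and only if `B` and `C`
commute. -/
theorem rank_Mmat_one (n : ℕ) (B C : Matrix (Fin n) (Fin n) ℂ) :
    (Mmat C B 1).rank = 2 * n + (B * C - C * B).rank ∧
      ((Mmat C B 1).rank ≤ 2 * n ↔ B * C = C * B) := by
  classical
  let e : ((Fin n ⊕ Fin n) ⊕ Fin n) ≃ (Fin 3 × Fin n) :=
    { toFun := Sum.elim (Sum.elim (fun j => (0, j)) (fun j => (1, j))) (fun j => (2, j))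
      invFun := fun p => ![fun j => Sum.inl (Sum.inl j), fun j => Sum.inl (Sum.inr j),
          fun j => Sum.inr j] p.1 p.2
      left_inv := by rintro ((j | j) | j) <;> rfl
      right_inv := by rintro ⟨i, j⟩; fin_cases i <;> rfl }
  set A₁₁ : Matrix (Fin n ⊕ Fin n) (Fin n ⊕ Fin n) ℂ := fromBlocks 0 1 (-1) 0 with hA11
  set M' : Matrix ((Fin n ⊕ Fin n) ⊕ Fin n) ((Fin n ⊕ Fin n) ⊕ Fin n) ℂ :=
    fromBlocks A₁₁ (fromRows (-B) C) (fromCols B (-C)) 0 with hM'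
  have hsub : Mmat C B 1 = M'.submatrix e.symm e.symm := by
    ext ⟨i, j⟩ ⟨k, l⟩
    fin_cases i <;> fin_cases k <;> rfl
  set P : Matrix ((Fin n ⊕ Fin n) ⊕ Fin n) ((Fin n ⊕ Fin n) ⊕ Fin n) ℂ :=
    fromBlocks 1 0 (fromCols C B) 1 with hP
  set Q : Matrix ((Fin n ⊕ Fin n) ⊕ Fin n) ((Fin n ⊕ Fin n) ⊕ Fin n) ℂ :=
    fromBlocks 1 (fromRows C B) 0 1 with hQ
  have hPdet : IsUnit P.det := by
    rw [hP, Matrix.det_fromBlocks_zero₁₂]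
    simp
  have hQdet : IsUnit Q.det := by
    rw [hQ, Matrix.det_fromBlocks_zero₂₁]
    simp
  have step1 : P * M' = fromBlocks A₁₁ (fromRows (-B) C) 0 (B * C - C * B) := by
    rw [hP, hM', Matrix.fromBlocks_multiply, hA11, Matrix.fromCols_mul_fromBlocks,
      Matrix.fromCols_mul_fromRows]
    rw [Matrix.fromBlocks_inj]
    refine ⟨by simp only [Matrix.zero_mul, Matrix.mul_zero, Matrix.one_mul, Matrix.mul_one, add_zero, zero_add, Matrix.neg_mul, Matrix.mul_neg, neg_add_cancel, add_neg_cancel, neg_zero, neg_neg]; try noncomm_ring, by simp only [Matrix.zero_mul, Matrix.mul_zero, Matrix.one_mul, Matrix.mul_one, add_zero, zero_add, Matrix.neg_mul, Matrix.mul_neg, neg_add_cancel, add_neg_cancel, neg_zero, neg_neg]; try noncomm_ring, ?_, by simp only [Matrix.zero_mul, Matrix.mul_zero, Matrix.one_mul, Matrix.mul_one, add_zero, zero_add, Matrix.neg_mul, Matrix.mul_neg, neg_add_cancel, add_neg_cancel, neg_zero, neg_neg]; try noncomm_ring⟩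
    rw [Matrix.one_mul, fromColumns_add',
      show (0 : Matrix (Fin n) (Fin n ⊕ Fin n) ℂ) = fromCols 0 0 from
        (Matrix.fromCols_zero).symm, Matrix.fromCols_ext_iff]
    exact ⟨by simp only [Matrix.zero_mul, Matrix.mul_zero, Matrix.one_mul, Matrix.mul_one, add_zero, zero_add, Matrix.neg_mul, Matrix.mul_neg, neg_add_cancel, add_neg_cancel, neg_zero, neg_neg]; try noncomm_ring, by simp only [Matrix.zero_mul, Matrix.mul_zero, Matrix.one_mul, Matrix.mul_one, add_zero, zero_add, Matrix.neg_mul, Matrix.mul_neg, neg_add_cancel, add_neg_cancel, neg_zero, neg_neg]; try noncomm_ring⟩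
  have key : P * M' * Q = fromBlocks A₁₁ 0 0 (B * C - C * B) := by
    rw [step1, hQ, hA11, Matrix.fromBlocks_multiply, Matrix.fromBlocks_mul_fromRows]
    rw [Matrix.fromBlocks_inj]
    refine ⟨by simp only [Matrix.zero_mul, Matrix.mul_zero, Matrix.one_mul, Matrix.mul_one, add_zero, zero_add, Matrix.neg_mul, Matrix.mul_neg, neg_add_cancel, add_neg_cancel, neg_zero, neg_neg]; try noncomm_ring, ?_, by simp only [Matrix.zero_mul, Matrix.mul_zero, Matrix.one_mul, Matrix.mul_one, add_zero, zero_add, Matrix.neg_mul, Matrix.mul_neg, neg_add_cancel, add_neg_cancel, neg_zero, neg_neg]; try noncomm_ring, by simp only [Matrix.zero_mul, Matrix.mul_zero, Matrix.one_mul, Matrix.mul_one, add_zero, zero_add, Matrix.neg_mul, Matrix.mul_neg, neg_add_cancel, add_neg_cancel, neg_zero, neg_neg]; try noncomm_ring⟩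
    rw [Matrix.one_mul, Matrix.mul_one, fromRows_add',
      show (0 : Matrix (Fin n ⊕ Fin n) (Fin n) ℂ) = fromRows 0 0 from
        (Matrix.fromRows_zero).symm, Matrix.fromRows_ext_iff]
    exact ⟨by simp only [Matrix.zero_mul, Matrix.mul_zero, Matrix.one_mul, Matrix.mul_one, add_zero, zero_add, Matrix.neg_mul, Matrix.mul_neg, neg_add_cancel, add_neg_cancel, neg_zero, neg_neg]; try noncomm_ring, by simp only [Matrix.zero_mul, Matrix.mul_zero, Matrix.one_mul, Matrix.mul_one, add_zero, zero_add, Matrix.neg_mul, Matrix.mul_neg, neg_add_cancel, add_neg_cancel, neg_zero, neg_neg]; try noncomm_ring⟩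
  have hA11unit : IsUnit A₁₁ := by
    refine isUnit_iff_exists.mpr ⟨-A₁₁, ?_, ?_⟩ <;>
      · rw [hA11, ← Matrix.fromBlocks_one]
        rw [show -(fromBlocks (0 : Matrix (Fin n) (Fin n) ℂ) 1 (-1) 0) =
            fromBlocks 0 (-1) 1 0 by rw [Matrix.fromBlocks_neg]; norm_num]
        rw [Matrix.fromBlocks_multiply, Matrix.fromBlocks_inj]
        refine ⟨by simp only [Matrix.zero_mul, Matrix.mul_zero, Matrix.one_mul, Matrix.mul_one, add_zero, zero_add, Matrix.neg_mul, Matrix.mul_neg, neg_add_cancel, add_neg_cancel, neg_zero, neg_neg]; try noncomm_ring, by simp only [Matrix.zero_mul, Matrix.mul_zero, Matrix.one_mul, Matrix.mul_one, add_zero, zero_add, Matrix.neg_mul, Matrix.mul_neg, neg_add_cancel, add_neg_cancel, neg_zero, neg_neg]; try noncomm_ring, by simp only [Matrix.zero_mul, Matrix.mul_zero, Matrix.one_mul, Matrix.mul_one, add_zero, zero_add, Matrix.neg_mul, Matrix.mul_neg, neg_add_cancel, add_neg_cancel, neg_zero, neg_neg]; try noncomm_ring, by simp only [Matrix.zero_mul,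 Matrix.mul_zero, Matrix.one_mul, Matrix.mul_one, add_zero, zero_add, Matrix.neg_mul, Matrix.mul_neg, neg_add_cancel, add_neg_cancel, neg_zero, neg_neg]; try noncomm_ring⟩
  have hrankA11 : A₁₁.rank = 2 * n := by
    rw [Matrix.rank_of_isUnit _ hA11unit]
    simp [two_mul]
  have hmain : (Mmat C B 1).rank = 2 * n + (B * C - C * B).rank := by
    rw [hsub, Matrix.rank_submatrix]
    have h2 : M'.rank = (P * M' * Q).rank := by
      rw [Matrix.rank_mul_eq_left_of_isUnit_det Q (P * M') hQdet,
        Matrix.rank_mul_eq_right_of_isUnit_det P M' hPdet]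
    rw [h2, key, rank_fromBlocks_diag, hrankA11]
  refine ⟨hmain, ?_⟩
  rw [hmain]
  constructor
  · intro h
    have : (B * C - C * B).rank = 0 := by omega
    have := (rank_eq_zero_iff' _).mp this
    linear_combination (norm := noncomm_ring) this
  · intro h
    have : B * C - C * B = 0 := by rw [h, sub_self]
    simp [this]
end

section
/- Let A₁, …, A_m be symmetric n×n complex matrices and let n' ≤ n. The following are equivalent: (i) the rank of the n×(mn) block matrix [A₁ | A₂ | ⋯ | A_m] is at most n'; (ii) there exist an n×n' complex matrix P and symmetric n'×n' complex matrices B₁, …, B_m such that A_l = P · B_l · Pᵀ for every l = 1, …, m. -/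
open Matrix
/-- Set-theoretic description of the subspace variety `Sub_{m,n'}`: for symmetric
matrices `A₁, …, A_m`, the flattening `[A₁ | ⋯ | A_m]` has rank at most `n'` if and only
if there are an `n × n'` matrix `P` and symmetric `n' × n'` matrices `B₁, …, B_m` with
`A_l = P · B_l · Pᵀ` for all `l`. -/
theorem rank_flattening_le_iff_subspace (m n n' : ℕ) (hn' : n' ≤ n)
    (A : Fin m → Matrix (Fin n) (Fin n) ℂ) (hsym : ∀ l, (A l)ᵀ = A l) :
    (Matrix.of fun i (q : Fin m × Fin n) => A q.1 i q.2).rank ≤ n' ↔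
      ∃ (P : Matrix (Fin n) (Fin n') ℂ) (B : Fin m → Matrix (Fin n') (Fin n') ℂ),
        (∀ l, (B l)ᵀ = B l) ∧ ∀ l, A l = P * B l * Pᵀ := by
  constructor
  · intro h
    set F : Matrix (Fin n) (Fin m × Fin n) ℂ :=
      Matrix.of fun i (q : Fin m × Fin n) => A q.1 i q.2 with hF
    set V : Submodule ℂ (Fin n → ℂ) := LinearMap.range F.mulVecLin with hVdef
    have hV : Module.finrank ℂ V ≤ n' := h
    -- columns of each A l lie in V
    have hcol : ∀ l (j : Fin n), (fun i => A l i j) ∈ V := by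
      intro l j
      refine ⟨Pi.single (l, j) 1, ?_⟩
      simp only [Matrix.mulVecLin_apply, Matrix.mulVec_single]
      funext i
      simp [hF]
    -- build p : ℂ^{n'} → ℂ^n and q : ℂ^n → ℂ^{n'} with p ∘ q = id on V
    obtain ⟨W, hW⟩ := Submodule.exists_isCompl V
    let π : (Fin n → ℂ) →ₗ[ℂ] V := V.linearProjOfIsCompl W hW
    let e : V ≃ₗ[ℂ] (Fin (Module.finrank ℂ V) → ℂ) := (Module.finBasis ℂ V).equivFun
    let jmap : (Fin (Module.finrank ℂ V) → ℂ) →ₗ[ℂ] (Fin n' → ℂ) :=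
      Function.ExtendByZero.linearMap ℂ (Fin.castLE hV)
    let smap : (Fin n' → ℂ) →ₗ[ℂ] (Fin (Module.finrank ℂ V) → ℂ) :=
      LinearMap.funLeft ℂ ℂ (Fin.castLE hV)
    have hsj : ∀ g, smap (jmap g) = g := by
      intro g
      funext i
      simp only [smap, jmap, LinearMap.funLeft_apply, Function.ExtendByZero.linearMap_apply]
      exact (Fin.castLE_injective hV).extend_apply g 0 i
    let p : (Fin n' → ℂ) →ₗ[ℂ] (Fin n → ℂ) := V.subtype ∘ₗ (e.symm.toLinearMap ∘ₗ smap)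
    let q : (Fin n → ℂ) →ₗ[ℂ] (Fin n' → ℂ) := jmap ∘ₗ (e.toLinearMap ∘ₗ π)
    have hpq : ∀ v ∈ V, p (q v) = v := by
      intro v hv
      simp only [p, q, LinearMap.comp_apply, LinearEquiv.coe_coe]
      rw [hsj, LinearEquiv.symm_apply_apply]
      have : π v = ⟨v, hv⟩ := Submodule.linearProjOfIsCompl_apply_left hW ⟨v, hv⟩
      rw [this]
      rfl
    set P : Matrix (Fin n) (Fin n') ℂ := LinearMap.toMatrix' p with hP
    set Q : Matrix (Fin n') (Fin n) ℂ := LinearMap.toMatrix' q with hQ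
    have hmulvec : ∀ v ∈ V, (P * Q) *ᵥ v = v := by
      intro v hv
      have : P * Q = LinearMap.toMatrix' (p ∘ₗ q) := (LinearMap.toMatrix'_comp p q).symm
      rw [this, ← Matrix.toLin'_apply, Matrix.toLin'_toMatrix']
      exact hpq v hv
    have key : ∀ l, (P * Q) * A l = A l := by
      intro l
      ext i j
      have hfix := hmulvec _ (hcol l j)
      have := congrFun hfix i
      simpa [Matrix.mul_apply, Matrix.mulVec, dotProduct] using this
    refine ⟨P, fun l => Q * A l * Qᵀ, ?_, ?_⟩
    · intro l
      simp [Matrix.transpose_mul, Matrix.mul_assoc, hsym l]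
    · intro l
      have h1 : P * (Q * A l * Qᵀ) * Pᵀ = (P * Q * A l) * (P * Q)ᵀ := by
        simp [Matrix.transpose_mul, Matrix.mul_assoc]
      rw [h1, key l]
      have h2 : A l * (P * Q)ᵀ = (P * Q * (A l)ᵀ)ᵀ := by
        simp [Matrix.transpose_mul]
      rw [h2, hsym l, key l, hsym l]
  · rintro ⟨P, B, hB, hAB⟩
    have hfac : (Matrix.of fun i (q : Fin m × Fin n) => A q.1 i q.2) =
        P * (Matrix.of fun (j : Fin n') (q : Fin m × Fin n) => (B q.1 * Pᵀ) j q.2) := by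
      ext i q
      have : A q.1 i q.2 = (P * (B q.1 * Pᵀ)) i q.2 := by
        rw [← Matrix.mul_assoc, ← hAB q.1]
      simp only [Matrix.of_apply, this, Matrix.mul_apply]
    rw [hfac]
    exact (Matrix.rank_mul_le_left _ _).trans (Matrix.rank_le_width P)
end

section
/- Let n = 4 and, for k = 1, 2, 3, let A_k be the symmetric 4×4 complex matrix whose (1, k+1) and (k+1, 1) entries are 1 and whose other entries are 0. Then: (i) the 4×12 block matrix F(A₁,A₂,A₃) = [A₁ | A₂ | A₃] has rank 4; (ii) the 12×12 block matrix M(A₁,A₂,A₃) = [[0, A₃, −A₂], [−A₃, 0, A₁], [A₂, −A₁, 0]] has rank 6; and (iii) the point of (Fin 3 × Sym2 (Fin 4) → ℂ) corresponding to (A₁,A₂,A₃) does not lie in MvPolynomial.zeroLocus (MvPolynomial.vanishingIdeal S₃), where S₃ is the set of points corresponding to triples of the form A_k = Σ_{i=1}^3 a⁽ⁱ⁾_k · v⁽ⁱ⁾ (v⁽ⁱ⁾)ᵀ with a⁽ⁱ⁾ ∈ ℂ³ and v⁽ⁱ⁾ ∈ ℂ⁴. -/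
open Matrix

/-- The `n × 3n` block matrix `F(A₁,A₂,A₃) = [A₁ | A₂ | A₃]`. -/
def Fmat {n : ℕ} (A₁ A₂ A₃ : Matrix (Fin n) (Fin n) ℂ) :
    Matrix (Fin n) (Fin 3 × Fin n) ℂ :=
  Matrix.of fun i q => ![A₁, A₂, A₃] q.1 i q.2

/-- The matrix `A_k(p)` of a point `p` parameterizing tuples of symmetric matrices. -/
def Amat {m n : ℕ} (p : Fin m × Sym2 (Fin n) → ℂ) (k : Fin m) : Matrix (Fin n) (Fin n) ℂ :=
  Matrix.of fun i j => p (k, s(i, j))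

/-- The point of `(Fin 3 × Sym2 (Fin 4) → ℂ)` corresponding to the triple of symmetric
`4 × 4` matrices `(A₁, A₂, A₃)` where `A_k` has `1` in the `(1, k+1)` and `(k+1, 1)`
entries and `0` elsewhere. -/
noncomputable def examplePoint : Fin 3 × Sym2 (Fin 4) → ℂ :=
  fun kq => if kq.2 = s((0 : Fin 4), kq.1.succ) then 1 else 0

/-! ### Auxiliary integer matrices for the rank computations -/

def Aℤ (k : Fin 3) : Matrix (Fin 4) (Fin 4) ℤ :=
  Matrix.of fun i j => if s(i, j) = s((0 : Fin 4), k.succ) then 1 else 0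

def Fℤ : Matrix (Fin 4) (Fin 3 × Fin 4) ℤ :=
  Matrix.of fun i q => Aℤ q.1 i q.2

def Mℤ : Matrix (Fin 3 × Fin 4) (Fin 3 × Fin 4) ℤ :=
  Matrix.of fun p q => ![![0, Aℤ 2, -(Aℤ 1)], ![-(Aℤ 2), 0, Aℤ 0], ![Aℤ 1, -(Aℤ 0), 0]] p.1 q.1 p.2 q.2

lemma hAmat (k : Fin 3) : Amat examplePoint k = (Aℤ k).map (Int.cast : ℤ → ℂ) := by
  ext i j
  simp only [Amat, Aℤ, examplePoint, Matrix.map_apply, Matrix.of_apply,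
    apply_ite (Int.cast : ℤ → ℂ)]
  norm_num

lemma hF : Fmat (Amat examplePoint 0) (Amat examplePoint 1) (Amat examplePoint 2)
    = Fℤ.map (Int.cast : ℤ → ℂ) := by
  ext i ⟨k, j⟩
  fin_cases k <;> simp [Fmat, Fℤ, hAmat]

lemma hM : Mmat (Amat examplePoint 0) (Amat examplePoint 1) (Amat examplePoint 2)
    = Mℤ.map (Int.cast : ℤ → ℂ) := by
  ext ⟨a, i⟩ ⟨b, j⟩
  fin_cases a <;> fin_cases b <;>
    simp [Mmat, Mℤ, hAmat, Matrix.map_apply]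

def Bℤ : Matrix (Fin 3 × Fin 4) (Fin 4) ℤ :=
  Matrix.of fun q j => if q = ![((0:Fin 3),(1:Fin 4)),(0,0),(1,0),(2,0)] j then 1 else 0

def Lℤ : Matrix (Fin 6) (Fin 3 × Fin 4) ℤ :=
  Matrix.of fun s q => if q = ![((2:Fin 3),(2:Fin 4)),(0,3),(1,1),(0,0),(1,0),(2,0)] s then 1 else 0

def Rℤ : Matrix (Fin 3 × Fin 4) (Fin 6) ℤ :=
  Matrix.of fun q s => if q = ![((0:Fin 3),(0:Fin 4)),(1,0),(2,0),(1,3),(2,1),(0,2)] s then 1 else 0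

lemma hFB : Fℤ * Bℤ = 1 := by decide
lemma hLMR : Lℤ * Mℤ * Rℤ = 1 := by decide
lemma hfact : Mℤ = Mℤ * Rℤ * (Lℤ * Mℤ) := by decide

abbrev cmap := (Int.castRingHom ℂ)

lemma rankF : (Fmat (Amat examplePoint 0) (Amat examplePoint 1) (Amat examplePoint 2)).rank = 4 := by
  rw [hF]
  refine le_antisymm (by simpa using Matrix.rank_le_card_height (Fℤ.map (Int.cast : ℤ → ℂ))) ?_
  have h1 : (Fℤ.map (Int.cast : ℤ → ℂ)) * (Bℤ.map (Int.cast : ℤ → ℂ)) = 1 := by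
    show Fℤ.map cmap * Bℤ.map cmap = 1
    rw [← Matrix.map_mul, hFB, Matrix.map_one _ (map_zero cmap) (map_one cmap)]
  have h2 := Matrix.rank_mul_le_left (Fℤ.map (Int.cast : ℤ → ℂ)) (Bℤ.map (Int.cast : ℤ → ℂ))
  rw [h1] at h2
  simpa using h2

lemma rankM : (Mmat (Amat examplePoint 0) (Amat examplePoint 1) (Amat examplePoint 2)).rank = 6 := by
  rw [hM]
  have hMc : Mℤ.map (Int.cast : ℤ → ℂ)
      = (Mℤ.map cmap * Rℤ.map cmap) * (Lℤ.map cmap * Mℤ.map cmap) := by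
    show Mℤ.map cmap = _
    rw [← Matrix.map_mul, ← Matrix.map_mul, ← Matrix.map_mul, ← hfact]
  refine le_antisymm ?_ ?_
  · calc (Mℤ.map (Int.cast : ℤ → ℂ)).rank
        = ((Mℤ.map cmap * Rℤ.map cmap) * (Lℤ.map cmap * Mℤ.map cmap)).rank := by rw [← hMc]
      _ ≤ (Lℤ.map cmap * Mℤ.map cmap).rank := Matrix.rank_mul_le_right _ _
      _ ≤ 6 := by simpa using Matrix.rank_le_card_height (Lℤ.map cmap * Mℤ.map cmap)
  · have h1 : (Lℤ.map cmap * Mℤ.map cmap) * Rℤ.map cmap = 1 := by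
      rw [← Matrix.map_mul, ← Matrix.map_mul, hLMR,
        Matrix.map_one _ (map_zero cmap) (map_one cmap)]
    have h2 := Matrix.rank_mul_le_left (Lℤ.map cmap * Mℤ.map cmap) (Rℤ.map cmap)
    rw [h1] at h2
    have h3 := Matrix.rank_mul_le_right (Lℤ.map cmap) (Mℤ.map cmap)
    have h4 : (6:ℕ) ≤ (Lℤ.map cmap * Mℤ.map cmap).rank := by simpa using h2
    exact le_trans h4 h3

/-! ### The `4 × 4` minor of `F` as a polynomial vanishing on the secant variety -/

open MvPolynomial

def kIdx : Fin 4 → Fin 3 := ![0, 0, 1, 2]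
def mIdx : Fin 4 → Fin 4 := ![1, 0, 0, 0]

noncomputable def secPoly : MvPolynomial (Fin 3 × Sym2 (Fin 4)) ℂ :=
  (Matrix.of fun i j : Fin 4 => X ((kIdx j, s(i, mIdx j)) : Fin 3 × Sym2 (Fin 4))).det

lemma eval_secPoly (p : Fin 3 × Sym2 (Fin 4) → ℂ) :
    eval p secPoly = (Matrix.of fun i j : Fin 4 => Amat p (kIdx j) i (mIdx j)).det := by
  rw [secPoly, RingHom.map_det]
  congr 1
  ext i j
  simp [Amat]

lemma secPoly_vanishes {p : Fin 3 × Sym2 (Fin 4) → ℂ}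
    (hp : ∃ (a : Fin 3 → Fin 3 → ℂ) (v : Fin 3 → Fin 4 → ℂ),
      ∀ k, Amat p k = ∑ i, a i k • Matrix.vecMulVec (v i) (v i)) :
    eval p secPoly = 0 := by
  obtain ⟨a, v, h⟩ := hp
  rw [eval_secPoly]
  set W : Matrix (Fin 4) (Fin 4) ℂ := Matrix.of fun i l => ![v 0, v 1, v 2, fun _ => 0] l i with hW
  set C : Matrix (Fin 4) (Fin 4) ℂ :=
    Matrix.of fun l j => ![fun j => a 0 (kIdx j) * v 0 (mIdx j),
      fun j => a 1 (kIdx j) * v 1 (mIdx j),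
      fun j => a 2 (kIdx j) * v 2 (mIdx j), fun _ => 0] l j with hC
  have hN : (Matrix.of fun i j : Fin 4 => Amat p (kIdx j) i (mIdx j)) = W * C := by
    ext i j
    rw [Matrix.mul_apply, Fin.sum_univ_four]
    simp only [Matrix.of_apply, h (kIdx j), Matrix.sum_apply, Fin.sum_univ_three,
      Matrix.smul_apply, Matrix.vecMulVec_apply, smul_eq_mul, hW, hC]
    simp
    ring
  rw [hN, Matrix.det_mul]
  have : W.det = 0 := Matrix.det_eq_zero_of_column_eq_zero 3 (fun i => rfl)
  rw [this, zero_mul]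

lemma secPoly_eval_examplePoint : eval examplePoint secPoly = 1 := by
  rw [eval_secPoly]
  have : (Matrix.of fun i j : Fin 4 => Amat examplePoint (kIdx j) i (mIdx j)) = 1 := by
    ext i j
    fin_cases i <;> fin_cases j <;>
      simp [Amat, examplePoint, kIdx, mIdx, Matrix.one_apply, Sym2.eq_iff] <;> decide
  rw [this, Matrix.det_one]

/-- Example 5.4 (`ex:23`, last part): the tensor `x = ∑ i, e_i ⊗ (v₁ ⊗ v_{i+1} + v_{i+1} ⊗ v₁)`
satisfies `κ(x) = (4, 6, 4)`, so it satisfies the Pfaffian rank condition `κ₁ ≤ 6` but does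
not lie in the (cone over the) third secant variety of `ℙ² × ℙ³` embedded by `O(1,2)`. -/
theorem examplePoint_kappa_and_not_mem_secant :
    (Fmat (Amat examplePoint 0) (Amat examplePoint 1) (Amat examplePoint 2)).rank = 4 ∧
    (Mmat (Amat examplePoint 0) (Amat examplePoint 1) (Amat examplePoint 2)).rank = 6 ∧
    examplePoint ∉ MvPolynomial.zeroLocus ℂ (MvPolynomial.vanishingIdeal ℂ
      {p : Fin 3 × Sym2 (Fin 4) → ℂ |
        ∃ (a : Fin 3 → Fin 3 → ℂ) (v : Fin 3 → Fin 4 → ℂ),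
          ∀ k, Amat p k = ∑ i, a i k • Matrix.vecMulVec (v i) (v i)}) := by
  refine ⟨rankF, rankM, ?_⟩
  intro hmem
  have hvan : secPoly ∈ MvPolynomial.vanishingIdeal ℂ
      {p : Fin 3 × Sym2 (Fin 4) → ℂ |
        ∃ (a : Fin 3 → Fin 3 → ℂ) (v : Fin 3 → Fin 4 → ℂ),
          ∀ k, Amat p k = ∑ i, a i k • Matrix.vecMulVec (v i) (v i)} := by
    rw [MvPolynomial.mem_vanishingIdeal_iff]
    intro x hx
    exact secPoly_vanishes hx
  have h0 := MvPolynomial.mem_zeroLocus_iff.mp hmem secPoly hvan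
  change eval examplePoint secPoly = 0 at h0
  rw [secPoly_eval_examplePoint] at h0
  exact one_ne_zero h0
end
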